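/- Let L be a finite set of vectors in Fin k → Bool that admits an HCO multiordering. Then there exists a function m' : (Fin k → Bool) → ℕ with m' v ≥ 1 for all v ∈ L, such that for every function m : (Fin k → Bool) → ℕ, there exists an HCO Boolean matrix whose columns are exactly the elements of L with each v ∈ L occurring exactly m v times, if and only if m v ≥ m' v for all v ∈ L. -/

import Mathlib

/-- A Boolean row vector has consecutive ones: any entry between two `true`s is `true`. -/
def RowCO {N : ℕ} (v : Fin N → Bool) : Prop :=
  ∀ p q j : Fin N, p ≤ j → j ≤ q → v p = true → v q = true → v j = true

/-- A Boolean matrix has the consecutive-ones property. -/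
def CO {k N : ℕ} (M : Fin k → Fin N → Bool) : Prop := ∀ r, RowCO (M r)

/-- A Boolean matrix has the circular consecutive-ones property:
in each row either the `true` entries or the `false` entries are consecutive. -/
def CCO {k N : ℕ} (M : Fin k → Fin N → Bool) : Prop :=
  ∀ r, RowCO (M r) ∨ RowCO (fun j => !(M r j))

/-- The column of `M` at position `j`. -/
def col {k N : ℕ} (M : Fin k → Fin N → Bool) (j : Fin N) : Fin k → Bool := fun r => M r j

/-- Two Boolean vectors are harmonious if one dominates the other pointwise. -/
def Harmonious {k : ℕ} (x y : Fin k → Bool) : Prop :=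
  (∀ r, x r ≤ y r) ∨ (∀ r, y r ≤ x r)

/-- A harmonious consecutive-ones matrix: CO and every pair of adjacent columns is harmonious. -/
def HCO {k N : ℕ} (M : Fin k → Fin N → Bool) : Prop :=
  CO M ∧ ∀ (j : ℕ) (h : j + 1 < N),
    Harmonious (col M ⟨j, Nat.lt_of_succ_lt h⟩) (col M ⟨j + 1, h⟩)

namespace HCOaux

variable {k : ℕ}

/-- comparability of two boolean vectors (implication form) -/
def Cmp {k : ℕ} (x y : Fin k → Bool) : Prop :=
  (∀ r, x r = true → y r = true) ∨ (∀ r, y r = true → x r = true)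

lemma cmp_refl (x : Fin k → Bool) : Cmp x x := Or.inl (fun _ h => h)

lemma cmp_symm {x y : Fin k → Bool} (h : Cmp x y) : Cmp y x := h.elim Or.inr Or.inl

/-- CO property for an ℕ-indexed word of length N -/
def WCO (k N : ℕ) (c : ℕ → Fin k → Bool) : Prop :=
  ∀ (r : Fin k) (p j q : ℕ), p ≤ j → j ≤ q → q < N →
    c p r = true → c q r = true → c j r = true

def WHarm (k N : ℕ) (c : ℕ → Fin k → Bool) : Prop :=
  ∀ j, j + 1 < N → Cmp (c j) (c (j + 1))

def WCols (k N : ℕ) (c : ℕ → Fin k → Bool) (L : Finset (Fin k → Bool)) : Prop :=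
  ∀ v, (∃ j, j < N ∧ c j = v) ↔ v ∈ L

def GoodWord (k N : ℕ) (c : ℕ → Fin k → Bool) (L : Finset (Fin k → Bool)) : Prop :=
  WCO k N c ∧ WHarm k N c ∧ WCols k N c L

/-- count of occurrences of v among first j letters -/
def sIdx (c : ℕ → Fin k → Bool) (v : Fin k → Bool) (j : ℕ) : ℕ :=
  ((Finset.range j).filter (fun i => c i = v)).card

def wcnt (N : ℕ) (c : ℕ → Fin k → Bool) (v : Fin k → Bool) : ℕ := sIdx c v N

lemma sIdx_eq_sum (c : ℕ → Fin k → Bool) (v : Fin k → Bool) (j : ℕ) :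
    sIdx c v j = ∑ i ∈ Finset.range j, (if c i = v then 1 else 0) := by
  rw [sIdx, Finset.card_filter]

lemma sIdx_mono (c : ℕ → Fin k → Bool) (v : Fin k → Bool) {j j' : ℕ} (h : j ≤ j') :
    sIdx c v j ≤ sIdx c v j' :=
  Finset.card_le_card (Finset.filter_subset_filter _ (Finset.range_subset_range.2 h))

lemma sIdx_succ (c : ℕ → Fin k → Bool) (v : Fin k → Bool) (j : ℕ) :
    sIdx c v (j + 1) = sIdx c v j + (if c j = v then 1 else 0) := by
  rw [sIdx_eq_sum, sIdx_eq_sum, Finset.sum_range_succ]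

lemma sIdx_succ_of_eq {c : ℕ → Fin k → Bool} {v : Fin k → Bool} {j : ℕ} (h : c j = v) :
    sIdx c v (j + 1) = sIdx c v j + 1 := by simp [sIdx_succ, h]

lemma sIdx_lt_cnt {N : ℕ} {c : ℕ → Fin k → Bool} {v : Fin k → Bool} {j : ℕ}
    (hj : j < N) (h : c j = v) : sIdx c v j + 1 ≤ wcnt N c v := by
  have := sIdx_mono c v (Nat.succ_le_of_lt hj)
  rw [sIdx_succ_of_eq h] at this
  exact this

/-- if the letters at positions in [j, j') are never v, then sIdx is constant -/
lemma sIdx_eq_of_no_v {c : ℕ → Fin k → Bool} {v : Fin k → Bool} {j j' : ℕ} (h : j ≤ j')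
    (hno : ∀ i, j ≤ i → i < j' → c i ≠ v) : sIdx c v j = sIdx c v j' := by
  obtain ⟨d, rfl⟩ := Nat.exists_eq_add_of_le h
  induction d with
  | zero => rfl
  | succ n ih =>
    have : sIdx c v j = sIdx c v (j + n) := ih (by omega) (fun i h1 h2 => hno i h1 (by omega))
    rw [this, ← Nat.add_assoc, sIdx_succ]
    have := hno (j + n) (by omega) (by omega)
    simp [this]



def Below (v x : Fin k → Bool) : Prop := (∀ r, v r = true → x r = true) ∧ v ≠ x

lemma below_exists_r {v x : Fin k → Bool} (h : Below v x) :
    ∃ r, x r = true ∧ v r = false := by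
  by_contra hc
  push_neg at hc
  apply h.2
  funext r
  cases hv : v r with
  | true => exact (h.1 r hv).symm
  | false =>
    cases hx : x r with
    | true => exact absurd (hc r hx) (by simp [hv])
    | false => rfl

/-- key: two positions sharing a row outside v have no v strictly between -/
lemma no_v_between {N : ℕ} {c : ℕ → Fin k → Bool} (hco : WCO k N c)
    {v : Fin k → Bool} {j j' : ℕ} (hle : j ≤ j') (hN : j' < N)
    (r : Fin k) (h1 : c j r = true) (h2 : c j' r = true) (hv : v r = false) :
    sIdx c v j = sIdx c v j' := by
  refine sIdx_eq_of_no_v hle (fun i hi1 hi2 => ?_)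
  intro he
  have := hco r j i j' hi1 (by omega) hN h1 h2
  rw [he] at this
  rw [this] at hv
  exact absurd hv (by simp)

noncomputable def Sfun (N : ℕ) (c : ℕ → Fin k → Bool) (v x : Fin k → Bool) : ℕ :=
  if h : ∃ j, j < N ∧ c j = x then sIdx c v h.choose else 0

lemma Sfun_spec {N : ℕ} {c : ℕ → Fin k → Bool} (v : Fin k → Bool) {x : Fin k → Bool}
    (h : ∃ j, j < N ∧ c j = x) :
    ∃ j, j < N ∧ c j = x ∧ sIdx c v j = Sfun N c v x := by
  refine ⟨h.choose, h.choose_spec.1, h.choose_spec.2, ?_⟩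
  rw [Sfun, dif_pos h]

lemma Sfun_eq {N : ℕ} {c : ℕ → Fin k → Bool} (hco : WCO k N c)
    {v x : Fin k → Bool} (hb : Below v x) {j : ℕ} (hj : j < N) (hc : c j = x) :
    sIdx c v j = Sfun N c v x := by
  obtain ⟨j', hj', hc', hS⟩ := Sfun_spec v ⟨j, hj, hc⟩
  rw [← hS]
  obtain ⟨r, hr1, hr2⟩ := below_exists_r hb
  rcases le_total j j' with h | h
  · exact no_v_between hco h hj' r (by rw [hc]; exact hr1) (by rw [hc']; exact hr1) hr2
  · exact (no_v_between hco h hj r (by rw [hc']; exact hr1) (by rw [hc]; exact hr1) hr2).symm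

/-- comparable letters above v have the same segment index -/
lemma Sfun_eq_of_cmp {N : ℕ} {c : ℕ → Fin k → Bool} {L : Finset (Fin k → Bool)}
    (hg : GoodWord k N c L) {v x y : Fin k → Bool} (hx : x ∈ L) (hy : y ∈ L)
    (bx : Below v x) (by' : Below v y) (hcmp : Cmp x y) :
    Sfun N c v x = Sfun N c v y := by
  obtain ⟨jx, hjx, hcx, hSx⟩ := Sfun_spec (c := c) v ((hg.2.2 x).2 hx)
  obtain ⟨jy, hjy, hcy, hSy⟩ := Sfun_spec (c := c) v ((hg.2.2 y).2 hy)
  rw [← hSx, ← hSy]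
  rcases hcmp with hxy | hyx
  · obtain ⟨r, hr1, hr2⟩ := below_exists_r bx
    rcases le_total jx jy with h | h
    · exact no_v_between hg.1 h hjy r (by rw [hcx]; exact hr1)
        (by rw [hcy]; exact hxy r hr1) hr2
    · exact (no_v_between hg.1 h hjx r (by rw [hcy]; exact hxy r hr1)
        (by rw [hcx]; exact hr1) hr2).symm
  · obtain ⟨r, hr1, hr2⟩ := below_exists_r by'
    rcases le_total jx jy with h | h
    · exact no_v_between hg.1 h hjy r (by rw [hcx]; exact hyx r hr1)
        (by rw [hcy]; exact hr1) hr2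
    · exact (no_v_between hg.1 h hjx r (by rw [hcy]; exact hr1)
        (by rw [hcx]; exact hyx r hr1) hr2).symm

lemma transfer_aux {N N' : ℕ} {c c' : ℕ → Fin k → Bool} {L : Finset (Fin k → Bool)}
    (hg : GoodWord k N c L) (hg' : GoodWord k N' c' L) {v x y : Fin k → Bool}
    (bx : Below v x) (by' : Below v y)
    {jx jy : ℕ} (hle : jx ≤ jy) (hjy : jy < N) (hcx : c jx = x) (hcy : c jy = y)
    (hsame : sIdx c v jx = sIdx c v jy) :
    Sfun N' c' v x = Sfun N' c' v y := by
  have key : ∀ d, jx + d ≤ jy →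
      (c (jx + d) ∈ L ∧ Below v (c (jx + d)) ∧
        Sfun N' c' v (c (jx + d)) = Sfun N' c' v x) := by
    intro d
    induction d with
    | zero =>
      intro _
      refine ⟨?_, ?_, ?_⟩ <;> simp only [Nat.add_zero, hcx]
      · exact (hg.2.2 x).1 ⟨jx, by omega, hcx⟩
      · exact bx
    | succ n ih =>
      intro hd
      have hn : jx + n ≤ jy := by omega
      obtain ⟨hzL, hzB, hzS⟩ := ih hn
      set i := jx + n with hi
      have hiN : i + 1 < N := by omega
      have hwL : c (i + 1) ∈ L := (hg.2.2 (c (i + 1))).1 ⟨i + 1, by omega, rfl⟩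
      have hwle : ∀ r, v r = true → c (i + 1) r = true := by
        intro r hr
        exact hg.1 r jx (i + 1) jy (by omega) (by omega) hjy
          (by rw [hcx]; exact bx.1 r hr) (by rw [hcy]; exact by'.1 r hr)
      have hwne : v ≠ c (i + 1) := by
        intro he
        rcases Nat.lt_or_ge (i + 1) jy with hlt | hge
        · have h1 : sIdx c v (i + 2) = sIdx c v (i + 1) + 1 := sIdx_succ_of_eq he.symm
          have h2 := sIdx_mono c v (show i + 2 ≤ jy by omega)
          have h3 := sIdx_mono c v (show jx ≤ i + 1 by omega)
          omega
        · have : i + 1 = jy := by omega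
          rw [this] at he
          rw [hcy] at he
          exact by'.2 he
      have hwB : Below v (c (i + 1)) := ⟨hwle, hwne⟩
      have hcmp : Cmp (c i) (c (i + 1)) := hg.2.1 i hiN
      have := Sfun_eq_of_cmp hg' hzL hwL hzB hwB hcmp
      exact ⟨hwL, hwB, by rw [show jx + (n+1) = i + 1 by omega, ← this, hzS]⟩
  have := key (jy - jx) (by omega)
  rw [show jx + (jy - jx) = jy by omega, hcy] at this
  rw [this.2.2]

lemma transfer {N N' : ℕ} {c c' : ℕ → Fin k → Bool} {L : Finset (Fin k → Bool)}
    (hg : GoodWord k N c L) (hg' : GoodWord k N' c' L) {v x y : Fin k → Bool}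
    (hx : x ∈ L) (hy : y ∈ L) (bx : Below v x) (by' : Below v y)
    (hS : Sfun N c v x = Sfun N c v y) : Sfun N' c' v x = Sfun N' c' v y := by
  obtain ⟨jx, hjx, hcx, hSx⟩ := Sfun_spec (c := c) v ((hg.2.2 x).2 hx)
  obtain ⟨jy, hjy, hcy, hSy⟩ := Sfun_spec (c := c) v ((hg.2.2 y).2 hy)
  have hsame : sIdx c v jx = sIdx c v jy := by rw [hSx, hSy, hS]
  rcases le_total jx jy with h | h
  · exact transfer_aux hg hg' bx by' h hjy hcx hcy hsame
  · exact (transfer_aux hg hg' by' bx h hjx hcy hcx hsame.symm).symm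

attribute [local instance] Classical.propDecidable

lemma card_image_eq_of_iff {α β γ : Type*} [DecidableEq β] [DecidableEq γ]
    (s : Finset α) (f : α → β) (g : α → γ)
    (h : ∀ a ∈ s, ∀ b ∈ s, f a = f b ↔ g a = g b) :
    (s.image f).card = (s.image g).card := by
  classical
  refine Finset.card_bij (fun b hb => g (Finset.mem_image.1 hb).choose) ?_ ?_ ?_
  · intro b hb
    have hs := (Finset.mem_image.1 hb).choose_spec
    exact Finset.mem_image.2 ⟨_, hs.1, rfl⟩
  · intro b1 hb1 b2 hb2 heq
    have hs1 := (Finset.mem_image.1 hb1).choose_spec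
    have hs2 := (Finset.mem_image.1 hb2).choose_spec
    rw [← hs1.2, ← hs2.2]
    exact (h _ hs1.1 _ hs2.1).2 heq
  · intro c hc
    obtain ⟨a, ha, rfl⟩ := Finset.mem_image.1 hc
    refine ⟨f a, Finset.mem_image.2 ⟨a, ha, rfl⟩, ?_⟩
    have hs := (Finset.mem_image.1 (Finset.mem_image.2 ⟨a, ha, rfl⟩ :
      f a ∈ s.image f)).choose_spec
    exact (h _ hs.1 _ ha).1 hs.2

noncomputable def imageCard (N : ℕ) (c : ℕ → Fin k → Bool) (v : Fin k → Bool)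
    (L : Finset (Fin k → Bool)) : ℕ :=
  ((L.filter (fun x => Below v x)).image (Sfun N c v)).card

lemma imageCard_eq {N N' : ℕ} {c c' : ℕ → Fin k → Bool} {L : Finset (Fin k → Bool)}
    (hg : GoodWord k N c L) (hg' : GoodWord k N' c' L) (v : Fin k → Bool) :
    imageCard N c v L = imageCard N' c' v L := by
  refine card_image_eq_of_iff _ _ _ (fun a ha b hb => ?_)
  rw [Finset.mem_filter] at ha hb
  exact ⟨transfer hg hg' ha.1 hb.1 ha.2 hb.2, transfer hg' hg ha.1 hb.1 ha.2 hb.2⟩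

lemma imageCard_le {N : ℕ} {c : ℕ → Fin k → Bool} {L : Finset (Fin k → Bool)}
    (hg : GoodWord k N c L) (v : Fin k → Bool) :
    imageCard N c v L ≤ wcnt N c v + 1 := by
  have hsub : (L.filter (fun x => Below v x)).image (Sfun N c v) ⊆
      Finset.range (wcnt N c v + 1) := by
    intro b hb
    obtain ⟨x, hx, rfl⟩ := Finset.mem_image.1 hb
    rw [Finset.mem_filter] at hx
    obtain ⟨j, hj, hc, hS⟩ := Sfun_spec (c := c) v ((hg.2.2 x).2 hx.1)
    rw [Finset.mem_range, ← hS]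
    have := sIdx_mono c v (Nat.le_of_lt hj)
    unfold wcnt
    omega
  simpa [imageCard] using (Finset.card_le_card hsub).trans (by simp)

lemma nth_occ (c : ℕ → Fin k → Bool) (v : Fin k → Bool) :
    ∀ n i, i < sIdx c v n → ∃ p, p < n ∧ c p = v ∧ sIdx c v p = i := by
  intro n
  induction n with
  | zero => intro i hi; simp [sIdx] at hi
  | succ n ih =>
    intro i hi
    rw [sIdx_succ] at hi
    by_cases hc : c n = v
    · rw [if_pos hc] at hi
      rcases Nat.lt_or_ge i (sIdx c v n) with h | h
      · obtain ⟨p, h1, h2, h3⟩ := ih i h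
        exact ⟨p, by omega, h2, h3⟩
      · exact ⟨n, by omega, hc, by omega⟩
    · rw [if_neg hc] at hi
      obtain ⟨p, h1, h2, h3⟩ := ih i (by omega)
      exact ⟨p, by omega, h2, h3⟩

lemma exists_deletable {N : ℕ} {c : ℕ → Fin k → Bool} {L : Finset (Fin k → Bool)}
    (hg : GoodWord k N c L) {v : Fin k → Bool} (_hv : v ∈ L)
    (ht2 : 2 ≤ wcnt N c v) (himg : imageCard N c v L ≤ wcnt N c v) :
    ∃ p, p < N ∧ c p = v ∧ (0 < p → p + 1 < N → Cmp (c (p - 1)) (c (p + 1))) := by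
  set t := wcnt N c v with hT
  have htN : t = sIdx c v N := hT
  -- find a missing segment index
  have hmiss : ∃ i, i ≤ t ∧
      i ∉ (L.filter (fun x => Below v x)).image (Sfun N c v) := by
    by_contra hcon
    push_neg at hcon
    have hsub : Finset.range (t + 1) ⊆ (L.filter (fun x => Below v x)).image (Sfun N c v) := by
      intro i hi
      rw [Finset.mem_range] at hi
      exact hcon i (by omega)
    have := Finset.card_le_card hsub
    rw [Finset.card_range] at this
    have : t + 1 ≤ imageCard N c v L := this
    omega
  obtain ⟨i, hit, hi⟩ := hmiss
  -- the star fact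
  have star : ∀ j, j < N → (∀ r, v r = true → c j r = true) → c j ≠ v →
      sIdx c v j ≠ i := by
    intro j hj hle hne heq
    apply hi
    have hB : Below v (c j) := ⟨hle, Ne.symm hne⟩
    have hL : c j ∈ L := (hg.2.2 (c j)).1 ⟨j, hj, rfl⟩
    refine Finset.mem_image.2 ⟨c j, Finset.mem_filter.2 ⟨hL, hB⟩, ?_⟩
    rw [← Sfun_eq hg.1 hB hj rfl, heq]
  rcases Nat.eq_zero_or_pos i with rfl | hipos
  · -- missing first segment: delete the first v
    obtain ⟨p, hp, hcp, hsp⟩ := nth_occ c v N 0 (by omega)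
    obtain ⟨q, hq, hcq, hsq⟩ := nth_occ c v N 1 (by omega)
    have hpq : p < q := by
      rcases Nat.lt_or_ge p q with h | h
      · exact h
      · have := sIdx_mono c v h
        omega
    refine ⟨p, hp, hcp, fun h0 hN1 => ?_⟩
    have hr : ∀ r, v r = true → c (p + 1) r = true := by
      rcases Nat.eq_or_lt_of_le (show p + 1 ≤ q by omega) with he | hlt
      · intro r hrr; rw [he, hcq]; exact hrr
      · intro r hrr
        exact hg.1 r p (p + 1) q (by omega) (by omega) hq
          (by rw [hcp]; exact hrr) (by rw [hcq]; exact hrr)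
    have e : p - 1 + 1 = p := by omega
    have hh := hg.2.1 (p - 1) (by omega)
    rw [e, hcp] at hh
    have hl : ∀ r, c (p - 1) r = true → v r = true := by
      rcases hh with h | h
      · exact h
      · by_cases he : c (p - 1) = v
        · have := sIdx_succ_of_eq he
          rw [e] at this
          have := sIdx_mono c v (show 0 ≤ p - 1 by omega)
          omega
        · exfalso
          apply star (p - 1) (by omega) h he
          have := sIdx_mono c v (show p - 1 ≤ p by omega)
          omega
    exact Or.inl (fun r hrr => hr r (hl r hrr))
  rcases Nat.lt_or_ge i t with hilt | hige
  · -- middle segment missing: two consecutive v's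
    obtain ⟨p, hp, hcp, hsp⟩ := nth_occ c v N (i - 1) (by omega)
    obtain ⟨q, hq, hcq, hsq⟩ := nth_occ c v N i (by omega)
    have hpq : p < q := by
      rcases Nat.lt_or_ge p q with h | h
      · exact h
      · have := sIdx_mono c v h
        omega
    have hspp : sIdx c v (p + 1) = i := by
      rw [sIdx_succ_of_eq hcp]; omega
    have hq1 : q = p + 1 := by
      by_contra hne
      have hlt : p + 1 < q := by omega
      have hB : ∀ r, v r = true → c (p + 1) r = true := by
        intro r hrr
        exact hg.1 r p (p + 1) q (by omega) (by omega) hq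
          (by rw [hcp]; exact hrr) (by rw [hcq]; exact hrr)
      have hne2 : c (p + 1) ≠ v := by
        intro he
        have h1 := sIdx_succ_of_eq he
        have e2 : p + 1 + 1 = p + 2 := by omega
        rw [e2] at h1
        have h2 := sIdx_mono c v (show p + 2 ≤ q by omega)
        omega
      exact star (p + 1) (by omega) hB hne2 hspp
    refine ⟨p, hp, hcp, fun h0 hN1 => ?_⟩
    have e : p - 1 + 1 = p := by omega
    have hh := hg.2.1 (p - 1) (by omega)
    rw [e, hcp] at hh
    have : c (p + 1) = v := by rw [← hq1, hcq]
    rw [this]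
    exact hh
  · -- last segment missing: delete the last v
    have hit' : i = t := by omega
    subst hit'
    obtain ⟨p, hp, hcp, hsp⟩ := nth_occ c v N (t - 1) (by omega)
    obtain ⟨q, hq, hcq, hsq⟩ := nth_occ c v N (t - 2) (by omega)
    have hqp : q < p := by
      rcases Nat.lt_or_ge q p with h | h
      · exact h
      · have := sIdx_mono c v h
        omega
    refine ⟨p, hp, hcp, fun h0 hN1 => ?_⟩
    have hspp : sIdx c v (p + 1) = t := by
      rw [sIdx_succ_of_eq hcp]; omega
    have hh := hg.2.1 p hN1
    rw [hcp] at hh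
    have hr : ∀ r, c (p + 1) r = true → v r = true := by
      rcases hh with h | h
      · by_cases he : c (p + 1) = v
        · have := sIdx_lt_cnt hN1 he
          omega
        · exact absurd hspp (star (p + 1) hN1 h he)
      · exact h
    have hl : ∀ r, v r = true → c (p - 1) r = true := by
      rcases Nat.eq_or_lt_of_le (show q ≤ p - 1 by omega) with he | hlt
      · intro r hrr; rw [← he, hcq]; exact hrr
      · intro r hrr
        exact hg.1 r q (p - 1) p (by omega) (by omega) hp
          (by rw [hcq]; exact hrr) (by rw [hcp]; exact hrr)
    exact Or.inr (fun r hrr => hl r (hr r hrr))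

lemma sum_shift (g : ℕ → ℕ) (a b : ℕ) :
    ∑ j ∈ Finset.Ico (a + 1) (b + 1), g (j - 1) = ∑ j ∈ Finset.Ico a b, g j := by
  rw [Finset.sum_Ico_eq_sum_range, Finset.sum_Ico_eq_sum_range]
  have e : b + 1 - (a + 1) = b - a := by omega
  rw [e]
  refine Finset.sum_congr rfl (fun i _ => ?_)
  congr 1
  omega

lemma sum_shift' (g : ℕ → ℕ) (a b : ℕ) :
    ∑ j ∈ Finset.Ico a b, g (j + 1) = ∑ j ∈ Finset.Ico (a + 1) (b + 1), g j := by
  rw [Finset.sum_Ico_eq_sum_range, Finset.sum_Ico_eq_sum_range]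
  have e : b + 1 - (a + 1) = b - a := by omega
  rw [e]
  refine Finset.sum_congr rfl (fun i _ => ?_)
  congr 1
  omega

lemma wcnt_eq_sum (N : ℕ) (c : ℕ → Fin k → Bool) (u : Fin k → Bool) :
    wcnt N c u = ∑ j ∈ Finset.Ico 0 N, (if c j = u then 1 else 0) := by
  rw [wcnt, sIdx_eq_sum, Finset.range_eq_Ico]

lemma dup_good {N : ℕ} {c : ℕ → Fin k → Bool} {L : Finset (Fin k → Bool)}
    (hg : GoodWord k N c L) {p : ℕ} (hp : p < N) :
    GoodWord k (N + 1) (fun j => if j ≤ p then c j else c (j - 1)) L ∧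
    ∀ u, wcnt (N + 1) (fun j => if j ≤ p then c j else c (j - 1)) u =
      wcnt N c u + (if c p = u then 1 else 0) := by
  set c' : ℕ → Fin k → Bool := fun j => if j ≤ p then c j else c (j - 1) with hc'
  have hemb : ∀ j, j < N + 1 → ∃ j', j' < N ∧ c' j = c j' ∧
      (j ≤ p → j' = j) ∧ (p < j → j' = j - 1) := by
    intro j hj
    by_cases h : j ≤ p
    · exact ⟨j, by omega, by simp [hc', h], fun _ => rfl, fun hh => absurd hh (by omega)⟩
    · exact ⟨j - 1, by omega, by simp [hc', h], fun hh => absurd hh h, fun _ => rfl⟩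
  constructor
  · refine ⟨?_, ?_, ?_⟩
    · -- WCO
      intro r pp j q h1 h2 h3 hcp hcq
      obtain ⟨pp', hpp', epp, e1p, e2p⟩ := hemb pp (by omega)
      obtain ⟨j', hj', ej, e1j, e2j⟩ := hemb j (by omega)
      obtain ⟨q', hq', eq', e1q, e2q⟩ := hemb q h3
      rw [epp] at hcp
      rw [eq'] at hcq
      rw [ej]
      have hle1 : pp' ≤ j' := by
        by_cases hx : pp ≤ p <;> by_cases hy : j ≤ p
        · rw [e1p hx, e1j hy]; omega
        · rw [e1p hx, e2j (by omega)]; omega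
        · omega
        · rw [e2p (by omega), e2j (by omega)]; omega
      have hle2 : j' ≤ q' := by
        by_cases hx : j ≤ p <;> by_cases hy : q ≤ p
        · rw [e1j hx, e1q hy]; omega
        · rw [e1j hx, e2q (by omega)]; omega
        · omega
        · rw [e2j (by omega), e2q (by omega)]; omega
      exact hg.1 r pp' j' q' hle1 hle2 hq' hcp hcq
    · -- WHarm
      intro j hj
      rcases Nat.lt_trichotomy (j + 1) (p + 1) with h | h | h
      · have e1 : c' j = c j := by simp [hc', show j ≤ p by omega]
        have e2 : c' (j + 1) = c (j + 1) := by simp [hc', show j + 1 ≤ p by omega]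
        rw [e1, e2]
        exact hg.2.1 j (by omega)
      · have e1 : c' j = c j := by simp [hc', show j ≤ p by omega]
        have e2 : c' (j + 1) = c j := by
          simp only [hc']
          rw [if_neg (by omega)]
          congr 1
        rw [e1, e2]
        exact cmp_refl _
      · have e1 : c' j = c (j - 1) := by simp [hc', show ¬ j ≤ p by omega]
        have e2 : c' (j + 1) = c j := by
          simp only [hc']
          rw [if_neg (by omega)]
          congr 1
        have e3 : j = (j - 1) + 1 := by omega
        rw [e1, e2]
        rw [e3]
        exact hg.2.1 (j - 1) (by omega)
    · -- WCols
      intro u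
      constructor
      · rintro ⟨j, hj, hcj⟩
        obtain ⟨j', hj', ej, _, _⟩ := hemb j hj
        exact (hg.2.2 u).1 ⟨j', hj', by rw [← ej]; exact hcj⟩
      · intro hu
        obtain ⟨j, hj, hcj⟩ := (hg.2.2 u).2 hu
        by_cases h : j ≤ p
        · exact ⟨j, by omega, by simp [hc', h]; exact hcj⟩
        · refine ⟨j + 1, by omega, ?_⟩
          simp only [hc']
          rw [if_neg (by omega)]
          simpa using hcj
  · -- counts
    intro u
    set g : ℕ → ℕ := fun j => if c j = u then 1 else 0 with hg'
    have hL : wcnt (N + 1) c' u =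
        (∑ j ∈ Finset.Ico 0 (p + 1), g j) + (∑ j ∈ Finset.Ico p N, g j) := by
      rw [wcnt_eq_sum]
      rw [← Finset.sum_Ico_consecutive (fun j => if c' j = u then 1 else 0)
        (Nat.zero_le (p + 1)) (by omega : p + 1 ≤ N + 1)]
      congr 1
      · refine Finset.sum_congr rfl (fun j hj => ?_)
        rw [Finset.mem_Ico] at hj
        simp [hc', g, show j ≤ p by omega]
      · rw [← sum_shift g p N]
        refine Finset.sum_congr rfl (fun j hj => ?_)
        rw [Finset.mem_Ico] at hj
        simp [hc', g, show ¬ j ≤ p by omega]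
    have hR : wcnt N c u =
        (∑ j ∈ Finset.Ico 0 (p + 1), g j) + (∑ j ∈ Finset.Ico (p + 1) N, g j) := by
      rw [wcnt_eq_sum, ← Finset.sum_Ico_consecutive g (Nat.zero_le (p + 1)) (by omega)]
    have hS : (∑ j ∈ Finset.Ico p N, g j) = g p + ∑ j ∈ Finset.Ico (p + 1) N, g j :=
      Finset.sum_eq_sum_Ico_succ_bot hp g
    rw [hL, hR, hS]
    have : g p = if c p = u then 1 else 0 := rfl
    omega

lemma exists_other_pos {N : ℕ} {c : ℕ → Fin k → Bool} {w : Fin k → Bool}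
    (hcnt : 2 ≤ wcnt N c w) (p : ℕ) : ∃ j, j < N ∧ j ≠ p ∧ c j = w := by
  have h1 : 1 < ((Finset.range N).filter (fun i => c i = w)).card := hcnt
  obtain ⟨a, ha, b, hb, hab⟩ := Finset.one_lt_card.1 h1
  rw [Finset.mem_filter, Finset.mem_range] at ha hb
  rcases eq_or_ne a p with rfl | h
  · exact ⟨b, hb.1, fun hh => absurd hh.symm hab, hb.2⟩
  · exact ⟨a, ha.1, h, ha.2⟩

lemma del_good {N : ℕ} {c : ℕ → Fin k → Bool} {L : Finset (Fin k → Bool)}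
    (hg : GoodWord k N c L) {p : ℕ} (hp : p < N)
    (hcmp : 0 < p → p + 1 < N → Cmp (c (p - 1)) (c (p + 1)))
    (hcnt : 2 ≤ wcnt N c (c p)) :
    GoodWord k (N - 1) (fun j => if j < p then c j else c (j + 1)) L ∧
    ∀ u, wcnt (N - 1) (fun j => if j < p then c j else c (j + 1)) u +
      (if c p = u then 1 else 0) = wcnt N c u := by
  set c' : ℕ → Fin k → Bool := fun j => if j < p then c j else c (j + 1) with hc'
  have hemb : ∀ j, j < N - 1 → ∃ j', j' < N ∧ c' j = c j' ∧
      (j < p → j' = j) ∧ (p ≤ j → j' = j + 1) := by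
    intro j hj
    by_cases h : j < p
    · exact ⟨j, by omega, by simp [hc', h], fun _ => rfl, fun hh => absurd hh (by omega)⟩
    · exact ⟨j + 1, by omega, by simp [hc', h], fun hh => absurd hh h, fun _ => rfl⟩
  constructor
  · refine ⟨?_, ?_, ?_⟩
    · -- WCO
      intro r pp j q h1 h2 h3 hcp2 hcq
      obtain ⟨pp', hpp', epp, e1p, e2p⟩ := hemb pp (by omega)
      obtain ⟨j', hj', ej, e1j, e2j⟩ := hemb j (by omega)
      obtain ⟨q', hq', eq', e1q, e2q⟩ := hemb q h3
      rw [epp] at hcp2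
      rw [eq'] at hcq
      rw [ej]
      have hle1 : pp' ≤ j' := by
        by_cases hx : pp < p <;> by_cases hy : j < p
        · rw [e1p hx, e1j hy]; omega
        · rw [e1p hx, e2j (by omega)]; omega
        · omega
        · rw [e2p (by omega), e2j (by omega)]; omega
      have hle2 : j' ≤ q' := by
        by_cases hx : j < p <;> by_cases hy : q < p
        · rw [e1j hx, e1q hy]; omega
        · rw [e1j hx, e2q (by omega)]; omega
        · omega
        · rw [e2j (by omega), e2q (by omega)]; omega
      exact hg.1 r pp' j' q' hle1 hle2 hq' hcp2 hcq
    · -- WHarm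
      intro j hj
      rcases Nat.lt_trichotomy (j + 1) p with h | h | h
      · have e1 : c' j = c j := by simp [hc', show j < p by omega]
        have e2 : c' (j + 1) = c (j + 1) := by simp [hc', h]
        rw [e1, e2]
        exact hg.2.1 j (by omega)
      · -- j + 1 = p : new adjacency between c (p-1) and c (p+1)
        have e1 : c' j = c j := by simp [hc', show j < p by omega]
        have e2 : c' (j + 1) = c (j + 2) := by
          simp only [hc']
          rw [if_neg (by omega)]
        rw [e1, e2]
        have ej : j = p - 1 := by omega
        have ej2 : j + 2 = p + 1 := by omega
        rw [ej2, ej]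
        exact hcmp (by omega) (by omega)
      · have e1 : c' j = c (j + 1) := by simp [hc', show ¬ j < p by omega]
        have e2 : c' (j + 1) = c (j + 2) := by
          simp only [hc']
          rw [if_neg (by omega)]
        rw [e1, e2]
        exact hg.2.1 (j + 1) (by omega)
    · -- WCols
      intro u
      constructor
      · rintro ⟨j, hj, hcj⟩
        obtain ⟨j', hj', ej, _, _⟩ := hemb j hj
        exact (hg.2.2 u).1 ⟨j', hj', by rw [← ej]; exact hcj⟩
      · intro hu
        obtain ⟨j, hj, hcj⟩ := (hg.2.2 u).2 hu
        by_cases hjp : j = p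
        · -- u = c p; use another occurrence
          subst hjp
          obtain ⟨j2, hj2, hne2, hcj2⟩ := exists_other_pos hcnt j
          rw [hcj] at hcj2
          rcases Nat.lt_or_ge j2 j with h | h
          · exact ⟨j2, by omega, by simp [hc', h]; exact hcj2⟩
          · refine ⟨j2 - 1, by omega, ?_⟩
            simp only [hc']
            rw [if_neg (by omega)]
            rw [show j2 - 1 + 1 = j2 by omega]
            exact hcj2
        · rcases Nat.lt_or_ge j p with h | h
          · exact ⟨j, by omega, by simp [hc', h]; exact hcj⟩
          · refine ⟨j - 1, by omega, ?_⟩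
            simp only [hc']
            rw [if_neg (by omega)]
            rw [show j - 1 + 1 = j by omega]
            exact hcj
  · -- counts
    intro u
    obtain ⟨M, rfl⟩ : ∃ M, N = M + 1 := ⟨N - 1, by omega⟩
    simp only [Nat.add_sub_cancel]
    set g : ℕ → ℕ := fun j => if c j = u then 1 else 0 with hgdef
    have hL : wcnt M c' u =
        (∑ j ∈ Finset.Ico 0 p, g j) + (∑ j ∈ Finset.Ico (p + 1) (M + 1), g j) := by
      rw [wcnt_eq_sum]
      rw [← Finset.sum_Ico_consecutive (fun j => if c' j = u then 1 else 0)
        (Nat.zero_le p) (by omega : p ≤ M)]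
      congr 1
      · refine Finset.sum_congr rfl (fun j hj => ?_)
        rw [Finset.mem_Ico] at hj
        simp [hc', g, show j < p by omega]
      · rw [← sum_shift' g p M]
        refine Finset.sum_congr rfl (fun j hj => ?_)
        rw [Finset.mem_Ico] at hj
        simp [hc', g, show ¬ j < p by omega]
    have hR : wcnt (M + 1) c u =
        (∑ j ∈ Finset.Ico 0 p, g j) + (g p + ∑ j ∈ Finset.Ico (p + 1) (M + 1), g j) := by
      rw [wcnt_eq_sum, ← Finset.sum_Ico_consecutive g (Nat.zero_le p) (by omega : p ≤ M + 1)]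
      rw [Finset.sum_eq_sum_Ico_succ_bot (by omega : p < M + 1) g]
    rw [hL, hR]
    have : g p = if c p = u then 1 else 0 := rfl
    omega

lemma wcnt_pos {N : ℕ} {c : ℕ → Fin k → Bool} {L : Finset (Fin k → Bool)}
    (hg : GoodWord k N c L) {v : Fin k → Bool} (hv : v ∈ L) : 1 ≤ wcnt N c v := by
  obtain ⟨j, hj, hcj⟩ := (hg.2.2 v).2 hv
  have : j ∈ (Finset.range N).filter (fun i => c i = v) := by
    rw [Finset.mem_filter, Finset.mem_range]; exact ⟨hj, hcj⟩
  exact Finset.card_pos.2 ⟨j, this⟩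

lemma wcnt_le (N : ℕ) (c : ℕ → Fin k → Bool) (v : Fin k → Bool) : wcnt N c v ≤ N := by
  calc wcnt N c v ≤ (Finset.range N).card := by unfold wcnt sIdx; exact Finset.card_le_card (Finset.filter_subset _ _)
  _ = N := Finset.card_range N

theorem main_words (L : Finset (Fin k → Bool))
    (hexW : ∃ N c, GoodWord k N c L) :
    ∃ m' : (Fin k → Bool) → ℕ, (∀ v ∈ L, 1 ≤ m' v) ∧
      ∀ m : (Fin k → Bool) → ℕ,
        ((∃ N c, GoodWord k N c L ∧ ∀ v ∈ L, wcnt N c v = m v) ↔ ∀ v ∈ L, m' v ≤ m v) := by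
  have hP : ∃ n, ∃ c : ℕ → Fin k → Bool, GoodWord k n c L := hexW
  classical
  obtain ⟨c0, hg0⟩ := Nat.find_spec hP
  set N0 := Nat.find hP with hN0
  have hmin : ∀ n, n < N0 → ¬ ∃ c : ℕ → Fin k → Bool, GoodWord k n c L :=
    fun n h => Nat.find_min hP h
  have hminall : ∀ N c, GoodWord k N c L → ∀ v ∈ L, wcnt N0 c0 v ≤ wcnt N c v := by
    intro N c hg v hv
    by_contra hlt
    push_neg at hlt
    have h1 : 1 ≤ wcnt N c v := wcnt_pos hg hv
    have ht2 : 2 ≤ wcnt N0 c0 v := by omega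
    have himg : imageCard N0 c0 v L ≤ wcnt N0 c0 v := by
      calc imageCard N0 c0 v L = imageCard N c v L := imageCard_eq hg0 hg v
      _ ≤ wcnt N c v + 1 := imageCard_le hg v
      _ ≤ wcnt N0 c0 v := by omega
    obtain ⟨p, hp, hcp, hcmp⟩ := exists_deletable hg0 hv ht2 himg
    have hcnt2 : 2 ≤ wcnt N0 c0 (c0 p) := by rw [hcp]; exact ht2
    obtain ⟨hg', _⟩ := del_good hg0 hp hcmp hcnt2
    have hN0pos : 0 < N0 := by
      have := wcnt_le N0 c0 v
      omega
    exact hmin (N0 - 1) (by omega) ⟨_, hg'⟩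
  refine ⟨fun v => wcnt N0 c0 v, fun v hv => wcnt_pos hg0 hv, fun m => ?_⟩
  constructor
  · rintro ⟨N, c, hg, hc⟩ v hv
    rw [← hc v hv]
    exact hminall N c hg v hv
  · intro hm
    suffices build : ∀ n (m : (Fin k → Bool) → ℕ), (∀ v ∈ L, wcnt N0 c0 v ≤ m v) →
        (∑ v ∈ L, (m v - wcnt N0 c0 v)) = n →
        ∃ N c, GoodWord k N c L ∧ ∀ v ∈ L, wcnt N c v = m v by
      exact build _ m hm rfl
    intro n
    induction n with
    | zero =>
      intro m hle hsum
      refine ⟨N0, c0, hg0, fun v hv => ?_⟩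
      have h0 := (Finset.sum_eq_zero_iff.1 hsum) v hv
      have := hle v hv
      omega
    | succ n ih =>
      intro m hle hsum
      have hex2 : ∃ v ∈ L, wcnt N0 c0 v < m v := by
        by_contra h
        push_neg at h
        have hz : ∀ v ∈ L, m v - wcnt N0 c0 v = 0 := by
          intro v hv
          have := hle v hv
          have := h v hv
          omega
        rw [Finset.sum_eq_zero hz] at hsum
        omega
      obtain ⟨v, hv, hlt⟩ := hex2
      set m1 := Function.update m v (m v - 1) with hm1
      have hle1 : ∀ u ∈ L, wcnt N0 c0 u ≤ m1 u := by
        intro u hu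
        by_cases h : u = v
        · subst h
          rw [hm1, Function.update_self]
          omega
        · rw [hm1, Function.update_of_ne h]
          exact hle u hu
      have hfun : (fun u => m1 u - wcnt N0 c0 u) =
          Function.update (fun u => m u - wcnt N0 c0 u) v (m v - 1 - wcnt N0 c0 v) := by
        funext u
        by_cases h : u = v
        · subst h
          rw [hm1, Function.update_self, Function.update_self]
        · rw [hm1, Function.update_of_ne h, Function.update_of_ne h]
      have hsum1 : ∑ u ∈ L, (m1 u - wcnt N0 c0 u) = n := by
        have e1 : ∑ u ∈ L, (m1 u - wcnt N0 c0 u) =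
            ∑ u ∈ L, Function.update (fun u => m u - wcnt N0 c0 u) v
              (m v - 1 - wcnt N0 c0 v) u := by
          rw [← hfun]
        rw [e1, Finset.sum_update_of_mem hv]
        have e2 : (m v - wcnt N0 c0 v) + ∑ x ∈ L \ {v}, (m x - wcnt N0 c0 x) =
            ∑ x ∈ L, (m x - wcnt N0 c0 x) := by
          rw [← Finset.erase_eq]
          exact Finset.add_sum_erase L (fun u => m u - wcnt N0 c0 u) hv
        have hsum' : ∑ x ∈ L, (m x - wcnt N0 c0 x) = n + 1 := hsum
        have hlv := hle v hv
        show (m v - 1 - wcnt N0 c0 v) + ∑ x ∈ L \ {v}, (m x - wcnt N0 c0 x) = n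
        omega
      obtain ⟨N, c, hg, hcnt⟩ := ih m1 hle1 hsum1
      obtain ⟨p, hp, hcp⟩ := (hg.2.2 v).2 hv
      obtain ⟨hg', hcnt'⟩ := dup_good hg hp
      refine ⟨N + 1, _, hg', fun u hu => ?_⟩
      rw [hcnt' u]
      by_cases h : u = v
      · subst h
        rw [if_pos hcp, hcnt u hv, hm1, Function.update_self]
        omega
      · rw [if_neg (fun hh : c p = u => h (by rw [← hh, hcp])), hcnt u hu, hm1,
          Function.update_of_ne h]
        omega

lemma ble {a b : Bool} : a ≤ b ↔ (a = true → b = true) := by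
  cases a <;> cases b <;> simp

lemma harm_iff_cmp {x y : Fin k → Bool} : Harmonious x y ↔ Cmp x y := by
  unfold Harmonious Cmp
  constructor
  · rintro (h | h)
    · exact Or.inl (fun r => (ble).1 (h r))
    · exact Or.inr (fun r => (ble).1 (h r))
  · rintro (h | h)
    · exact Or.inl (fun r => (ble).2 (h r))
    · exact Or.inr (fun r => (ble).2 (h r))

lemma cnt_bridge {N : ℕ} {M : Fin k → Fin N → Bool} {c : ℕ → Fin k → Bool}
    (hcol : ∀ j : Fin N, col M j = c j.1) (v : Fin k → Bool) :
    (Finset.univ.filter (fun j : Fin N => col M j = v)).card = wcnt N c v := by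
  classical
  unfold wcnt sIdx
  refine Finset.card_bij (fun a _ => (a : ℕ)) ?_ ?_ ?_
  · intro a ha
    rw [Finset.mem_filter] at ha
    rw [Finset.mem_filter, Finset.mem_range]
    exact ⟨a.2, by rw [← hcol a]; exact ha.2⟩
  · intro a _ b _ h
    exact Fin.val_injective h
  · intro b hb
    rw [Finset.mem_filter, Finset.mem_range] at hb
    refine ⟨⟨b, hb.1⟩, ?_, rfl⟩
    rw [Finset.mem_filter]
    exact ⟨Finset.mem_univ _, by rw [hcol ⟨b, hb.1⟩]; exact hb.2⟩

lemma toWord {N : ℕ} {M : Fin k → Fin N → Bool} {L : Finset (Fin k → Bool)}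
    (h : HCO M) (hr : Set.range (col M) = ↑L) :
    ∃ c : ℕ → Fin k → Bool, GoodWord k N c L ∧
      ∀ v, (Finset.univ.filter (fun j : Fin N => col M j = v)).card = wcnt N c v := by
  have hc : ∀ (j : ℕ) (hj : j < N),
      (fun j => if hj : j < N then col M ⟨j, hj⟩ else (fun _ : Fin k => false)) j =
        col M ⟨j, hj⟩ :=
    fun j hj => dif_pos hj
  refine ⟨fun j => if hj : j < N then col M ⟨j, hj⟩ else (fun _ => false), ⟨?_, ?_, ?_⟩, ?_⟩
  · -- WCO
    intro r p j q h1 h2 h3 hp hq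
    have hpN : p < N := by omega
    have hjN : j < N := by omega
    rw [hc p hpN] at hp
    rw [hc q h3] at hq
    rw [hc j hjN]
    exact h.1 r ⟨p, hpN⟩ ⟨q, h3⟩ ⟨j, hjN⟩ (Fin.mk_le_mk.2 h1) (Fin.mk_le_mk.2 h2) hp hq
  · -- WHarm
    intro j hj
    rw [hc j (by omega), hc (j + 1) hj]
    exact harm_iff_cmp.1 (h.2 j hj)
  · -- WCols
    intro v
    have hvr := Set.ext_iff.1 hr v
    rw [Set.mem_range] at hvr
    constructor
    · rintro ⟨j, hj, hcj⟩
      rw [hc j hj] at hcj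
      exact hvr.1 ⟨⟨j, hj⟩, hcj⟩
    · intro hv
      obtain ⟨jj, hjj⟩ := hvr.2 hv
      exact ⟨jj.1, jj.2, by rw [hc jj.1 jj.2, Fin.eta]; exact hjj⟩
  · intro v
    exact cnt_bridge (fun j => by rw [dif_pos j.2, Fin.eta]) v

lemma fromWord {N : ℕ} {c : ℕ → Fin k → Bool} {L : Finset (Fin k → Bool)}
    (hg : GoodWord k N c L) :
    ∃ M : Fin k → Fin N → Bool, HCO M ∧ Set.range (col M) = ↑L ∧
      ∀ v, (Finset.univ.filter (fun j : Fin N => col M j = v)).card = wcnt N c v := by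
  refine ⟨fun r j => c j.1 r, ⟨?_, ?_⟩, ?_, ?_⟩
  · intro r p q j h1 h2 hp hq
    exact hg.1 r p.1 j.1 q.1 h1 h2 q.2 hp hq
  · intro j hj
    exact harm_iff_cmp.2 (hg.2.1 j hj)
  · ext v
    rw [Set.mem_range]
    constructor
    · rintro ⟨jj, hjj⟩
      exact (hg.2.2 v).1 ⟨jj.1, jj.2, hjj⟩
    · intro hv
      obtain ⟨j, hj, hcj⟩ := (hg.2.2 v).2 hv
      exact ⟨⟨j, hj⟩, hcj⟩
  · intro v
    exact cnt_bridge (fun j => rfl) v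

end HCOaux

/-- If a finite set `L` admits an HCO multiordering, there is a minimal multiplicity
`m'` (with `m' v ≥ 1` on `L`) such that a multiplicity `m` is realizable by an HCO matrix
with column set `L` iff `m v ≥ m' v` for all `v ∈ L`. -/
theorem HCO_minimal_multiplicity (k : ℕ) (L : Finset (Fin k → Bool))
    (hex : ∃ (N : ℕ) (A : Fin k → Fin N → Bool), HCO A ∧ Set.range (col A) = ↑L) :
    ∃ m' : (Fin k → Bool) → ℕ, (∀ v ∈ L, 1 ≤ m' v) ∧
      ∀ m : (Fin k → Bool) → ℕ,
        (∃ (N : ℕ) (M : Fin k → Fin N → Bool), HCO M ∧ Set.range (col M) = ↑L ∧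
          ∀ v ∈ L, (Finset.univ.filter (fun j => col M j = v)).card = m v) ↔
        (∀ v ∈ L, m' v ≤ m v) := by
  classical
  obtain ⟨N, A, hA, hrA⟩ := hex
  obtain ⟨c0, hg0, -⟩ := HCOaux.toWord hA hrA
  obtain ⟨m', hm1, hm2⟩ := HCOaux.main_words L ⟨N, c0, hg0⟩
  refine ⟨m', hm1, fun m => ?_⟩
  rw [← hm2 m]
  constructor
  · rintro ⟨N', M, hM, hrM, hcard⟩
    obtain ⟨c, hg, hcnt⟩ := HCOaux.toWord hM hrM
    exact ⟨N', c, hg, fun v hv => by rw [← hcnt v]; exact hcard v hv⟩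
  · rintro ⟨N', c, hg, hcnt⟩
    obtain ⟨M, hM, hrM, hcard⟩ := HCOaux.fromWord hg
    exact ⟨N', M, hM, hrM, fun v hv => by rw [hcard v, hcnt v hv]⟩
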